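/- The number of subgraphs of G on which a d-flow exists equals the number of orientations of G on which a d-flow exists; that is, |S_f| = |O_f|. -/

import Mathlib

open Finset

section Defs

variable {V : Type*}

/-- Reversal of a directed edge. -/
def drev (e : V × V) : V × V := (e.2, e.1)

/-- `K` is a subgraph of the (symmetric) edge set `E`: it contains either both or
neither of `e` and `drev e` for every `e ∈ E`. -/
def IsSubgraph [DecidableEq V] (E K : Finset (V × V)) : Prop :=
  K ⊆ E ∧ ∀ e ∈ E, (e ∈ K ↔ drev e ∈ K)

/-- `L` is an orientation of the (symmetric) edge set `E`: it contains exactly one of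
`e` and `drev e` for every `e ∈ E`. -/
def IsOrientation [DecidableEq V] (E L : Finset (V × V)) : Prop :=
  L ⊆ E ∧ ∀ e ∈ E, (e ∈ L ↔ drev e ∉ L)

variable [Fintype V] [DecidableEq V]

/-- `f` is a `d`-flow on the directed subgraph `D` of the graph with edge set `E`. -/
def IsFlow (E D : Finset (V × V)) (d : V → ℤ) (f : V × V → ℝ) : Prop :=
  (∀ e ∈ E, 0 ≤ f e ∧ f e ≤ 1) ∧
  (∀ e, e ∉ D → f e = 0) ∧
  ∀ u : V,
    ((Finset.univ.filter (fun v : V => (u, v) ∈ E)).sum fun v => f (u, v)) -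
      ((Finset.univ.filter (fun v : V => (v, u) ∈ E)).sum fun v => f (v, u)) = (d u : ℝ)

/-- A `d`-flow exists on `D`. -/
def AdmitsFlow (E D : Finset (V × V)) (d : V → ℤ) : Prop :=
  ∃ f : V × V → ℝ, IsFlow E D d f

/-- The `w`-cost of a flow `f`. -/
def flowCost (E : Finset (V × V)) (w : V × V → ℝ) (f : V × V → ℝ) : ℝ :=
  ∑ e ∈ E, w e * f e

/-- `f` is a min-cost `d`-flow on `D`. -/
def IsMinCostFlow (E D : Finset (V × V)) (d : V → ℤ) (w : V × V → ℝ)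
    (f : V × V → ℝ) : Prop :=
  IsFlow E D d f ∧ ∀ g : V × V → ℝ, IsFlow E D d g → flowCost E w f ≤ flowCost E w g

/-- The `{0,1}`-valued function determined by a set of edges. -/
def ind (S : Finset (V × V)) : V × V → ℝ := fun e => if e ∈ S then 1 else 0

/-- `A` assigns to every flow-admitting `D ⊆ E` the (edge set of the) unique,
`{0,1}`-valued min-cost `d`-flow on `D`. -/
def GoodA (E : Finset (V × V)) (d : V → ℤ) (w : V × V → ℝ)
    (A : Finset (V × V) → Finset (V × V)) : Prop :=
  ∀ D : Finset (V × V), D ⊆ E → AdmitsFlow E D d →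
    IsMinCostFlow E D d w (ind (A D)) ∧
    ∀ f : V × V → ℝ, IsMinCostFlow E D d w f → f = ind (A D)

/-- `A(D) = A(D')`: both `D` and `D'` admit a `d`-flow and their unique min-cost
`d`-flows coincide.  (If one of them admits no `d`-flow this is false.) -/
def AEq (E : Finset (V × V)) (d : V → ℤ) (A : Finset (V × V) → Finset (V × V))
    (D D' : Finset (V × V)) : Prop :=
  AdmitsFlow E D d ∧ AdmitsFlow E D' d ∧ A D = A D'

/-- `D ⊕ e := (D ∪ {e}) \ {drev e}`. -/
def oplus (D : Finset (V × V)) (e : V × V) : Finset (V × V) := insert e D \ {drev e}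

/-- `D + e := D ∪ {e, drev e}`. -/
def padd (D : Finset (V × V)) (e : V × V) : Finset (V × V) := D ∪ {e, drev e}

/-- `D − e := D \ {e, drev e}`. -/
def psub (D : Finset (V × V)) (e : V × V) : Finset (V × V) := D \ {e, drev e}

/-- The representative of `{e, drev e}` lying in the reference orientation `E'`. -/
def chi (E' : Finset (V × V)) (e : V × V) : V × V := if e ∈ E' then e else drev e

/-- The map `φ_e`. -/
noncomputable def phiE (E : Finset (V × V)) (d : V → ℤ)
    (A : Finset (V × V) → Finset (V × V)) (E' : Finset (V × V))
    (e : V × V) (D : Finset (V × V)) : Finset (V × V) := by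
  classical
  exact
    if ¬ AEq E d A D (oplus D e) then oplus D (drev e)
    else if ¬ AEq E d A D (oplus D (drev e)) then oplus D e
    else if e ∈ D then oplus D (chi E' e) else oplus D (drev (chi E' e))

/-- The map `ψ_e`. -/
noncomputable def psiE (E : Finset (V × V)) (d : V → ℤ)
    (A : Finset (V × V) → Finset (V × V)) (E' : Finset (V × V))
    (e : V × V) (D : Finset (V × V)) : Finset (V × V) := by
  classical
  exact
    if ¬ AEq E d A D (padd D e) then psub D e
    else if ¬ AEq E d A D (psub D e) then padd D e
    else if chi E' e ∈ D then padd D e else psub D e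

end Defs

set_option linter.unusedSectionVars false

namespace FlowCountAux

variable {V : Type*} [DecidableEq V]

theorem drev_drev (e : V × V) : drev (drev e) = e := rfl

def itv (t s : Prop) [Decidable t] [Decidable s] : Set ℝ :=
  if t then (if s then Set.Icc 0 1 else Set.Icc (-1) 0)
  else (if s then Set.Icc (-1) 1 else {0})

theorem itv_convex (t s : Prop) [Decidable t] [Decidable s] : Convex ℝ (itv t s) := by
  unfold itv; split_ifs <;> first | exact convex_Icc _ _ | exact convex_singleton _

/-- the box of constraints: coordinates in `T` are orientation-style, others subgraph-style -/
def box (E' T S : Finset (V × V)) : Set ((V × V) → ℝ) :=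
  {x | ∀ e ∈ E', x e ∈ itv (e ∈ T) (e ∈ S)}

open Classical in
theorem step {H : Set ((V × V) → ℝ)} (hH : Convex ℝ H) (E' T R : Finset (V × V))
    {j : V × V} (hj : j ∈ E') (hjT : j ∉ T) (hjR : j ∉ R) :
    ((if (H ∩ box E' T (insert j R)).Nonempty then 1 else 0) +
      (if (H ∩ box E' T R).Nonempty then 1 else 0) : ℕ)
    = (if (H ∩ box E' (insert j T) (insert j R)).Nonempty then 1 else 0) +
      (if (H ∩ box E' (insert j T) R).Nonempty then 1 else 0) := by
  set Q : Set ℝ → Prop := fun I =>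
    ∃ x, x ∈ H ∧ (∀ e ∈ E', e ≠ j → x e ∈ itv (e ∈ T) (e ∈ R)) ∧ x j ∈ I with hQ
  have box_iff : ∀ (T' S' : Finset (V × V)), (∀ e, e ≠ j → ((e ∈ T') ↔ (e ∈ T))) →
      (∀ e, e ≠ j → ((e ∈ S') ↔ (e ∈ R))) →
      ((H ∩ box E' T' S').Nonempty ↔ Q (itv (j ∈ T') (j ∈ S'))) := by
    intro T' S' hT' hS'
    constructor
    · rintro ⟨x, hxH, hxb⟩
      refine ⟨x, hxH, fun e he hne => ?_, hxb j hj⟩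
      have := hxb e he
      simpa [itv, hT' e hne, hS' e hne] using this
    · rintro ⟨x, hxH, hxe, hxj⟩
      refine ⟨x, hxH, fun e he => ?_⟩
      by_cases hne : e = j
      · subst hne; exact hxj
      · have := hxe e he hne
        simpa [itv, hT' e hne, hS' e hne] using this
  have h1 : (H ∩ box E' T (insert j R)).Nonempty ↔ Q (Set.Icc (-1) 1) := by
    have := box_iff T (insert j R) (fun e _ => Iff.rfl)
      (fun e hne => by simp [Finset.mem_insert, hne])
    simpa [itv, hjT, Finset.mem_insert] using this
  have h0 : (H ∩ box E' T R).Nonempty ↔ Q {0} := by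
    have := box_iff T R (fun e _ => Iff.rfl) (fun e _ => Iff.rfl)
    simpa [itv, hjT, hjR] using this
  have h01 : (H ∩ box E' (insert j T) (insert j R)).Nonempty ↔ Q (Set.Icc 0 1) := by
    have := box_iff (insert j T) (insert j R)
      (fun e hne => by simp [Finset.mem_insert, hne])
      (fun e hne => by simp [Finset.mem_insert, hne])
    simpa [itv, Finset.mem_insert] using this
  have hm0 : (H ∩ box E' (insert j T) R).Nonempty ↔ Q (Set.Icc (-1) 0) := by
    have := box_iff (insert j T) R
      (fun e hne => by simp [Finset.mem_insert, hne]) (fun e _ => Iff.rfl)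
    simpa [itv, Finset.mem_insert, hjR] using this
  have hsplit : Q (Set.Icc (-1) 1) ↔ Q (Set.Icc 0 1) ∨ Q (Set.Icc (-1) 0) := by
    constructor
    · rintro ⟨x, hxH, hxe, hxj⟩
      rcases le_or_gt 0 (x j) with h | h
      · exact Or.inl ⟨x, hxH, hxe, h, hxj.2⟩
      · exact Or.inr ⟨x, hxH, hxe, hxj.1, h.le⟩
    · rintro (⟨x, hxH, hxe, hxj⟩ | ⟨x, hxH, hxe, hxj⟩)
      · exact ⟨x, hxH, hxe, le_trans (by norm_num) hxj.1, hxj.2⟩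
      · exact ⟨x, hxH, hxe, hxj.1, le_trans hxj.2 (by norm_num)⟩
  have hmeet : Q {0} ↔ Q (Set.Icc 0 1) ∧ Q (Set.Icc (-1) 0) := by
    constructor
    · rintro ⟨x, hxH, hxe, hxj⟩
      have hx0 : x j = 0 := hxj
      exact ⟨⟨x, hxH, hxe, by simp [hx0]⟩, ⟨x, hxH, hxe, by simp [hx0]⟩⟩
    · rintro ⟨⟨x, hxH, hxe, hxj⟩, ⟨y, hyH, hye, hyj⟩⟩
      have ha : 0 ≤ x j := hxj.1
      have hb : 0 ≤ -(y j) := by linarith [hyj.2]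
      by_cases hab : x j + -(y j) = 0
      · have hx0 : x j = 0 := by linarith
        exact ⟨x, hxH, hxe, hx0⟩
      · have habpos : 0 < x j + -(y j) := lt_of_le_of_ne (by linarith) (Ne.symm hab)
        set t : ℝ := (-(y j)) / (x j + -(y j)) with ht
        have ht0 : 0 ≤ t := div_nonneg hb habpos.le
        have ht1 : t ≤ 1 := by
          rw [div_le_one habpos]; linarith
        have hts : t + (1 - t) = 1 := by ring
        refine ⟨fun e => t * x e + (1 - t) * y e, ?_, ?_, ?_⟩
        · have := hH hxH hyH ht0 (by linarith) hts
          convert this using 1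
          funext e; rfl
        · intro e he hne
          exact itv_convex _ _ (hxe e he hne) (hye e he hne) ht0 (by linarith) hts
        · show t * x j + (1 - t) * y j = 0
          have h1t : (1 - t) = x j / (x j + -(y j)) := by
            rw [eq_div_iff habpos.ne', ht, sub_mul, div_mul_cancel₀ _ habpos.ne']; ring
          rw [ht, h1t]
          field_simp
          ring
  rw [if_congr h1 rfl rfl, if_congr h0 rfl rfl, if_congr h01 rfl rfl, if_congr hm0 rfl rfl,
    if_congr hsplit rfl rfl, if_congr hmeet rfl rfl]
  by_cases hp : Q (Set.Icc 0 1) <;> by_cases hq : Q (Set.Icc (-1) 0) <;> simp [hp, hq]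

end FlowCountAux

namespace FlowCountAux
variable {V : Type*} [DecidableEq V]

open Classical in
theorem count_const {H : Set ((V × V) → ℝ)} (hH : Convex ℝ H) (E' : Finset (V × V)) :
    ∀ T ⊆ E',
    (E'.powerset.filter (fun S => (H ∩ box E' T S).Nonempty)).card
      = (E'.powerset.filter (fun S => (H ∩ box E' (∅ : Finset (V × V)) S).Nonempty)).card := by
  intro T hT
  induction T using Finset.induction_on with
  | empty => rfl
  | @insert j T hjT ih =>
    have hj : j ∈ E' := hT (Finset.mem_insert_self j T)
    have hTE : T ⊆ E' := fun a ha => hT (Finset.mem_insert_of_mem ha)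
    rw [← ih hTE]
    have key : ∀ T' : Finset (V × V),
        (E'.powerset.filter (fun S => (H ∩ box E' T' S).Nonempty)).card
        = ∑ S ∈ E'.powerset, (if (H ∩ box E' T' S).Nonempty then 1 else 0) := by
      intro T'; rw [Finset.card_filter]
    rw [key, key]
    have hEj : E' = insert j (E'.erase j) := by
      rw [Finset.insert_erase hj]
    have hje : j ∉ E'.erase j := Finset.notMem_erase _ _
    rw [hEj, Finset.sum_powerset_insert hje, Finset.sum_powerset_insert hje,
      ← Finset.sum_add_distrib, ← Finset.sum_add_distrib]
    apply Finset.sum_congr rfl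
    intro R hR
    have hjR : j ∉ R := fun h => hje (Finset.mem_powerset.mp hR h)
    have := step hH E' T R hj hjT hjR
    rw [← hEj]
    rw [add_comm, ← this, add_comm]
end FlowCountAux



namespace FlowCountAux

variable {V : Type*} [DecidableEq V] [Fintype V]

theorem drev_inj {V : Type*} : Function.Injective (drev : V × V → V × V) := by
  intro a b h
  cases a; cases b; cases h; rfl

variable {E E' : Finset (V × V)}

section Split
variable (hE'E : E' ⊆ E) (hE_symm : ∀ e, e ∈ E ↔ drev e ∈ E)
  (hcover : ∀ e ∈ E, e ∈ E' ∨ drev e ∈ E') (hdisj : ∀ e ∈ E', drev e ∉ E')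

include hE'E hE_symm hcover hdisj

theorem E_eq : E = E' ∪ E'.image drev := by
  ext e
  simp only [Finset.mem_union, Finset.mem_image]
  constructor
  · intro he
    rcases hcover e he with h | h
    · exact Or.inl h
    · exact Or.inr ⟨drev e, h, drev_drev e⟩
  · rintro (h | ⟨a, ha, rfl⟩)
    · exact hE'E h
    · exact (hE_symm a).mp (hE'E ha)

theorem E_disj : Disjoint E' (E'.image drev) := by
  rw [Finset.disjoint_left]
  intro e he him
  rcases Finset.mem_image.mp him with ⟨a, ha, rfl⟩
  exact (hdisj a ha) he

omit hE'E hE_symm hcover hdisj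

theorem sum_out (f : V × V → ℝ) (u : V) :
    (∑ v ∈ Finset.univ.filter (fun v => (u, v) ∈ E), f (u, v))
      = ∑ e ∈ E.filter (fun e => e.1 = u), f e := by
  refine Finset.sum_bij' (fun v _ => (u, v)) (fun e _ => e.2) ?_ ?_ ?_ ?_ ?_
  · intro v hv
    simp only [Finset.mem_filter, Finset.mem_univ, true_and] at hv ⊢
    exact ⟨hv, trivial⟩
  · intro e he
    simp only [Finset.mem_filter, Finset.mem_univ, true_and] at he ⊢
    have : (u, e.2) = e := by
      cases e; cases he.2; rfl
    rw [this]; exact he.1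
  · intro v hv; rfl
  · intro e he
    simp only [Finset.mem_filter] at he
    cases e; cases he.2; rfl
  · intro v hv; rfl

theorem sum_in (f : V × V → ℝ) (u : V) :
    (∑ v ∈ Finset.univ.filter (fun v => (v, u) ∈ E), f (v, u))
      = ∑ e ∈ E.filter (fun e => e.2 = u), f e := by
  refine Finset.sum_bij' (fun v _ => (v, u)) (fun e _ => e.1) ?_ ?_ ?_ ?_ ?_
  · intro v hv
    simp only [Finset.mem_filter, Finset.mem_univ, true_and] at hv ⊢
    exact ⟨hv, trivial⟩
  · intro e he
    simp only [Finset.mem_filter, Finset.mem_univ, true_and] at he ⊢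
    have : (e.1, u) = e := by
      cases e; cases he.2; rfl
    rw [this]; exact he.1
  · intro v hv; rfl
  · intro e he
    simp only [Finset.mem_filter] at he
    cases e; cases he.2; rfl
  · intro v hv; rfl

theorem sum_filter_image (f : V × V → ℝ) (p : V × V → Prop) [DecidablePred p] :
    (∑ e ∈ (E'.image drev).filter p, f e) = ∑ e ∈ E'.filter (fun e => p (drev e)), f (drev e) := by
  have himg : (E'.image drev).filter p = (E'.filter (fun e => p (drev e))).image drev := by
    ext e
    simp only [Finset.mem_filter, Finset.mem_image]
    constructor
    · rintro ⟨⟨a, ha, rfl⟩, hp⟩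
      exact ⟨a, ⟨ha, hp⟩, rfl⟩
    · rintro ⟨a, ⟨ha, hp⟩, rfl⟩
      exact ⟨⟨a, ha, rfl⟩, hp⟩
  rw [himg]
  exact Finset.sum_image (fun a _ b _ h => drev_inj h)

include hE'E hE_symm hcover hdisj in
theorem div_split (f : V × V → ℝ) (u : V) :
    (∑ v ∈ Finset.univ.filter (fun v => (u, v) ∈ E), f (u, v))
      - (∑ v ∈ Finset.univ.filter (fun v => (v, u) ∈ E), f (v, u))
    = (∑ e ∈ E'.filter (fun e => e.1 = u), (f e - f (drev e)))
      - (∑ e ∈ E'.filter (fun e => e.2 = u), (f e - f (drev e))) := by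
  rw [sum_out, sum_in]
  rw [E_eq hE'E hE_symm hcover hdisj, Finset.filter_union, Finset.filter_union,
    Finset.sum_union (Finset.disjoint_filter_filter (E_disj hE'E hE_symm hcover hdisj)),
    Finset.sum_union (Finset.disjoint_filter_filter (E_disj hE'E hE_symm hcover hdisj)),
    sum_filter_image, sum_filter_image]
  have h1 : E'.filter (fun e => (drev e).1 = u) = E'.filter (fun e => e.2 = u) := rfl
  have h2 : E'.filter (fun e => (drev e).2 = u) = E'.filter (fun e => e.1 = u) := rfl
  rw [h1, h2, Finset.sum_sub_distrib, Finset.sum_sub_distrib]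
  ring

end Split

/-- The affine "net-flow" constraint set. -/
def Hset (E' : Finset (V × V)) (d : V → ℤ) : Set ((V × V) → ℝ) :=
  {x | ∀ u, (∑ e ∈ E'.filter (fun e => e.1 = u), x e)
      - (∑ e ∈ E'.filter (fun e => e.2 = u), x e) = (d u : ℝ)}

theorem Hset_convex (E' : Finset (V × V)) (d : V → ℤ) : Convex ℝ (Hset E' d) := by
  intro x hx y hy a b ha hb hab u
  have hx' := hx u
  have hy' := hy u
  simp only [Pi.add_apply, Pi.smul_apply, smul_eq_mul]
  rw [Finset.sum_add_distrib, Finset.sum_add_distrib, ← Finset.mul_sum, ← Finset.mul_sum,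
    ← Finset.mul_sum, ← Finset.mul_sum]
  have : a * ((d u : ℝ)) + b * ((d u : ℝ)) = (d u : ℝ) := by
    rw [← add_mul, hab, one_mul]
  nlinarith [hx', hy']

end FlowCountAux



namespace FlowCountAux
variable {V : Type*} [DecidableEq V] [Fintype V]
variable {E E' : Finset (V × V)}

theorem max_sub_max (a : ℝ) : max a 0 - max (-a) 0 = a := by
  rcases le_total a 0 with h | h
  · rw [max_eq_right h, max_eq_left (by linarith)]; ring
  · rw [max_eq_left h, max_eq_right (by linarith)]; ring

theorem admits_iff (hE'E : E' ⊆ E) (hE_symm : ∀ e, e ∈ E ↔ drev e ∈ E)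
    (hcover : ∀ e ∈ E, e ∈ E' ∨ drev e ∈ E') (hdisj : ∀ e ∈ E', drev e ∉ E')
    (d : V → ℤ) {D : Finset (V × V)} (hD : D ⊆ E) :
    AdmitsFlow E D d ↔ ∃ x ∈ Hset E' d, ∀ e ∈ E',
      x e ∈ Set.Icc (if drev e ∈ D then (-1 : ℝ) else 0) (if e ∈ D then (1 : ℝ) else 0) := by
  constructor
  · rintro ⟨f, hf01, hf0, hfdiv⟩
    refine ⟨fun e => f e - f (drev e), ?_, ?_⟩
    · intro u
      have := div_split hE'E hE_symm hcover hdisj f u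
      rw [← this]
      exact hfdiv u
    · intro e he
      have heE : e ∈ E := hE'E he
      have hreE : drev e ∈ E := (hE_symm e).mp heE
      have h1 := hf01 e heE
      have h2 := hf01 (drev e) hreE
      constructor
      · by_cases hrD : drev e ∈ D
        · simp only [if_pos hrD]
          linarith [h1.1, h2.2]
        · simp only [if_neg hrD]
          have : f (drev e) = 0 := hf0 _ hrD
          linarith [h1.1]
      · by_cases heD : e ∈ D
        · simp only [if_pos heD]
          linarith [h1.2, h2.1]
        · simp only [if_neg heD]
          have : f e = 0 := hf0 _ heD
          linarith [h2.1]
  · rintro ⟨x, hxH, hxb⟩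
    classical
    set f : V × V → ℝ := fun e => if e ∈ E' then max (x e) 0
      else if drev e ∈ E' then max (-(x (drev e))) 0 else 0 with hfdef
    have hfval : ∀ e, f e = if e ∈ E' then max (x e) 0
      else if drev e ∈ E' then max (-(x (drev e))) 0 else 0 := fun e => rfl
    refine ⟨f, ?_, ?_, ?_⟩
    · intro e heE
      rw [hfval]
      rcases hcover e heE with h | h
      · rw [if_pos h]
        refine ⟨le_max_right _ _, ?_⟩
        have hb := (hxb e h).2
        have : x e ≤ 1 := le_trans hb (by split_ifs <;> norm_num)
        exact max_le this (by norm_num)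
      · have hne : e ∉ E' := by
          intro hc
          exact (hdisj e hc) h
        rw [if_neg hne, if_pos h]
        refine ⟨le_max_right _ _, ?_⟩
        have hb := (hxb (drev e) h).1
        have : -(x (drev e)) ≤ 1 := by
          have : (if drev (drev e) ∈ D then (-1 : ℝ) else 0) ≤ x (drev e) := hb
          rw [drev_drev] at this
          split_ifs at this <;> linarith
        exact max_le this (by norm_num)
    · intro e heD
      rw [hfval]
      by_cases h : e ∈ E'
      · rw [if_pos h]
        have hb := (hxb e h).2
        rw [if_neg heD] at hb
        exact max_eq_right hb
      · rw [if_neg h]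
        by_cases h2 : drev e ∈ E'
        · rw [if_pos h2]
          have hb := (hxb (drev e) h2).1
          rw [drev_drev, if_neg heD] at hb
          exact max_eq_right (by linarith)
        · rw [if_neg h2]
    · intro u
      rw [div_split hE'E hE_symm hcover hdisj f u]
      have hval : ∀ e ∈ E', f e - f (drev e) = x e := by
        intro e he
        have hrne : drev e ∉ E' := hdisj e he
        rw [hfval, hfval, if_pos he, if_neg hrne, drev_drev, if_pos he]
        exact max_sub_max (x e)
      rw [Finset.sum_congr rfl (fun e he => hval e (Finset.mem_filter.mp he).1),
        Finset.sum_congr rfl (fun e he => hval e (Finset.mem_filter.mp he).1)]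
      exact hxH u

end FlowCountAux



namespace FlowCountAux
variable {V : Type*} [DecidableEq V] [Fintype V]
variable {E E' : Finset (V × V)}

theorem sub_box_iff (hE'E : E' ⊆ E) (hE_symm : ∀ e, e ∈ E ↔ drev e ∈ E)
    (hcover : ∀ e ∈ E, e ∈ E' ∨ drev e ∈ E') (hdisj : ∀ e ∈ E', drev e ∉ E')
    (d : V → ℤ) {K : Finset (V × V)} (hK : IsSubgraph E K) :
    AdmitsFlow E K d ↔ (Hset E' d ∩ box E' (∅ : Finset (V × V)) (K ∩ E')).Nonempty := by
  rw [admits_iff hE'E hE_symm hcover hdisj d hK.1]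
  have hiff : ∀ x : (V × V) → ℝ, (∀ e ∈ E',
      x e ∈ Set.Icc (if drev e ∈ K then (-1 : ℝ) else 0) (if e ∈ K then (1 : ℝ) else 0))
      ↔ x ∈ box E' (∅ : Finset (V × V)) (K ∩ E') := by
    intro x
    refine forall₂_congr fun e he => ?_
    have hrev : e ∈ K ↔ drev e ∈ K := hK.2 e (hE'E he)
    have hKE : e ∈ K ∩ E' ↔ e ∈ K := by simp [Finset.mem_inter, he]
    by_cases hk : e ∈ K
    · simp [itv, hk, hrev.mp hk, hKE, Finset.notMem_empty]
    · have : drev e ∉ K := fun hc => hk (hrev.mpr hc)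
      simp [itv, hk, this, hKE, Finset.notMem_empty, Set.Icc_self]
  constructor
  · rintro ⟨x, hx1, hx2⟩
    exact ⟨x, hx1, (hiff x).mp hx2⟩
  · rintro ⟨x, hx1, hx2⟩
    exact ⟨x, hx1, (hiff x).mpr hx2⟩

theorem ori_box_iff (hE'E : E' ⊆ E) (hE_symm : ∀ e, e ∈ E ↔ drev e ∈ E)
    (hcover : ∀ e ∈ E, e ∈ E' ∨ drev e ∈ E') (hdisj : ∀ e ∈ E', drev e ∉ E')
    (d : V → ℤ) {L : Finset (V × V)} (hL : IsOrientation E L) :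
    AdmitsFlow E L d ↔ (Hset E' d ∩ box E' E' (L ∩ E')).Nonempty := by
  rw [admits_iff hE'E hE_symm hcover hdisj d hL.1]
  have hiff : ∀ x : (V × V) → ℝ, (∀ e ∈ E',
      x e ∈ Set.Icc (if drev e ∈ L then (-1 : ℝ) else 0) (if e ∈ L then (1 : ℝ) else 0))
      ↔ x ∈ box E' E' (L ∩ E') := by
    intro x
    refine forall₂_congr fun e he => ?_
    have hrev : e ∈ L ↔ drev e ∉ L := hL.2 e (hE'E he)
    have hLE : e ∈ L ∩ E' ↔ e ∈ L := by simp [Finset.mem_inter, he]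
    by_cases hk : e ∈ L
    · simp [itv, hk, hrev.mp hk, hLE, he]
    · have : drev e ∈ L := by
        by_contra hc
        exact hk (hrev.mpr hc)
      simp [itv, hk, this, hLE, he]
  constructor
  · rintro ⟨x, hx1, hx2⟩
    exact ⟨x, hx1, (hiff x).mp hx2⟩
  · rintro ⟨x, hx1, hx2⟩
    exact ⟨x, hx1, (hiff x).mpr hx2⟩

end FlowCountAux


theorem card_subgraphs_eq_card_orientations_admitting_flow
    {V : Type*} [Fintype V] [DecidableEq V]
    (E : Finset (V × V)) (hE_symm : ∀ e, e ∈ E ↔ drev e ∈ E)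
    (hE_ne : ∀ e ∈ E, e.1 ≠ e.2)
    (d : V → ℤ) (hd : ∑ u : V, d u = 0) :
    {K : Finset (V × V) | IsSubgraph E K ∧ AdmitsFlow E K d}.ncard =
      {L : Finset (V × V) | IsOrientation E L ∧ AdmitsFlow E L d}.ncard := by
  classical
  open FlowCountAux in
  -- reference orientation via an injective enumeration of vertices
  let ord : V → ℕ := fun v => (Fintype.equivFin V v : ℕ)
  have hord_inj : Function.Injective ord := fun a b h => by
    have := Fin.val_injective h
    exact (Fintype.equivFin V).injective this
  set E' : Finset (V × V) := E.filter (fun e => ord e.1 < ord e.2) with hE'def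
  have hE'E : E' ⊆ E := Finset.filter_subset _ _
  have hdisj : ∀ e ∈ E', drev e ∉ E' := by
    intro e he hre
    rw [hE'def, Finset.mem_filter] at he hre
    have h1 := he.2
    have h2 := hre.2
    simp only [drev] at h2
    omega
  have hcover : ∀ e ∈ E, e ∈ E' ∨ drev e ∈ E' := by
    intro e he
    have hne : ord e.1 ≠ ord e.2 := fun h => hE_ne e he (hord_inj h)
    rcases lt_or_gt_of_ne hne with h | h
    · left; rw [hE'def, Finset.mem_filter]; exact ⟨he, h⟩
    · right; rw [hE'def, Finset.mem_filter]
      exact ⟨(hE_symm e).mp he, h⟩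
  have hH : Convex ℝ (Hset E' d) := Hset_convex E' d
  -- identify the two sets with finsets
  have hSset : {K : Finset (V × V) | IsSubgraph E K ∧ AdmitsFlow E K d}
      = ↑(E.powerset.filter (fun K => IsSubgraph E K ∧ AdmitsFlow E K d)) := by
    ext K
    simp only [Set.mem_setOf_eq, Finset.coe_filter, Finset.mem_powerset]
    exact ⟨fun h => ⟨h.1.1, h⟩, fun h => h.2⟩
  have hOset : {L : Finset (V × V) | IsOrientation E L ∧ AdmitsFlow E L d}
      = ↑(E.powerset.filter (fun L => IsOrientation E L ∧ AdmitsFlow E L d)) := by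
    ext L
    simp only [Set.mem_setOf_eq, Finset.coe_filter, Finset.mem_powerset]
    exact ⟨fun h => ⟨h.1.1, h⟩, fun h => h.2⟩
  rw [hSset, hOset, Set.ncard_coe_finset, Set.ncard_coe_finset]
  -- subgraph side bijection
  have hsub : (E.powerset.filter (fun K => IsSubgraph E K ∧ AdmitsFlow E K d)).card
      = (E'.powerset.filter
          (fun S => (Hset E' d ∩ box E' (∅ : Finset (V × V)) S).Nonempty)).card := by
    refine Finset.card_bij (fun K _ => K ∩ E') ?_ ?_ ?_
    · intro K hK
      rw [Finset.mem_filter] at hK ⊢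
      refine ⟨Finset.mem_powerset.mpr Finset.inter_subset_right, ?_⟩
      exact (sub_box_iff hE'E hE_symm hcover hdisj d hK.2.1).mp hK.2.2
    · intro K1 h1 K2 h2 heq
      change K1 ∩ E' = K2 ∩ E' at heq
      rw [Finset.mem_filter] at h1 h2
      have hs1 := h1.2.1
      have hs2 := h2.2.1
      ext e
      constructor
      · intro he
        have heE : e ∈ E := hs1.1 he
        rcases hcover e heE with h | h
        · have : e ∈ K1 ∩ E' := Finset.mem_inter.mpr ⟨he, h⟩
          rw [heq] at this
          exact (Finset.mem_inter.mp this).1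
        · have hre : drev e ∈ K1 := (hs1.2 e heE).mp he
          have : drev e ∈ K1 ∩ E' := Finset.mem_inter.mpr ⟨hre, h⟩
          rw [heq] at this
          exact (hs2.2 e heE).mpr (Finset.mem_inter.mp this).1
      · intro he
        have heE : e ∈ E := hs2.1 he
        rcases hcover e heE with h | h
        · have : e ∈ K2 ∩ E' := Finset.mem_inter.mpr ⟨he, h⟩
          rw [← heq] at this
          exact (Finset.mem_inter.mp this).1
        · have hre : drev e ∈ K2 := (hs2.2 e heE).mp he
          have : drev e ∈ K2 ∩ E' := Finset.mem_inter.mpr ⟨hre, h⟩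
          rw [← heq] at this
          exact (hs1.2 e heE).mpr (Finset.mem_inter.mp this).1
    · intro S hS
      rw [Finset.mem_filter, Finset.mem_powerset] at hS
      obtain ⟨hSE', hSne⟩ := hS
      set K : Finset (V × V) := S ∪ S.image drev with hKdef
      have hmemK : ∀ e, e ∈ K ↔ e ∈ S ∨ drev e ∈ S := by
        intro e
        rw [hKdef]
        simp only [Finset.mem_union, Finset.mem_image]
        constructor
        · rintro (h | ⟨a, ha, rfl⟩)
          · exact Or.inl h
          · exact Or.inr (by rw [drev_drev]; exact ha)
        · rintro (h | h)
          · exact Or.inl h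
          · exact Or.inr ⟨drev e, h, drev_drev e⟩
      have hKsub : IsSubgraph E K := by
        constructor
        · intro e he
          rcases (hmemK e).mp he with h | h
          · exact hE'E (hSE' h)
          · exact (hE_symm e).mpr (hE'E (hSE' h))
        · intro e _
          rw [hmemK, hmemK, drev_drev]
          exact or_comm
      have hKS : K ∩ E' = S := by
        ext e
        rw [Finset.mem_inter, hmemK]
        constructor
        · rintro ⟨h | h, he'⟩
          · exact h
          · exact absurd he' (by
              have := hdisj (drev e) (hSE' h)
              rw [drev_drev] at this
              exact this)
        · intro h
          exact ⟨Or.inl h, hSE' h⟩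
      refine ⟨K, ?_, hKS⟩
      rw [Finset.mem_filter, Finset.mem_powerset]
      refine ⟨hKsub.1, hKsub, ?_⟩
      rw [sub_box_iff hE'E hE_symm hcover hdisj d hKsub, hKS]
      exact hSne
  -- orientation side bijection
  have hori : (E.powerset.filter (fun L => IsOrientation E L ∧ AdmitsFlow E L d)).card
      = (E'.powerset.filter (fun S => (Hset E' d ∩ box E' E' S).Nonempty)).card := by
    refine Finset.card_bij (fun L _ => L ∩ E') ?_ ?_ ?_
    · intro L hL
      rw [Finset.mem_filter] at hL ⊢
      refine ⟨Finset.mem_powerset.mpr Finset.inter_subset_right, ?_⟩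
      exact (ori_box_iff hE'E hE_symm hcover hdisj d hL.2.1).mp hL.2.2
    · intro L1 h1 L2 h2 heq
      change L1 ∩ E' = L2 ∩ E' at heq
      rw [Finset.mem_filter] at h1 h2
      have hs1 := h1.2.1
      have hs2 := h2.2.1
      have key : ∀ L1 L2 : Finset (V × V), IsOrientation E L1 → IsOrientation E L2 →
          L1 ∩ E' = L2 ∩ E' → ∀ e ∈ L1, e ∈ L2 := by
        intro L1 L2 hs1 hs2 heq e he
        have heE : e ∈ E := hs1.1 he
        rcases hcover e heE with h | h
        · have : e ∈ L1 ∩ E' := Finset.mem_inter.mpr ⟨he, h⟩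
          rw [heq] at this
          exact (Finset.mem_inter.mp this).1
        · have hre : drev e ∉ L1 := (hs1.2 e heE).mp he
          have hre2 : drev e ∉ L2 := by
            intro hc
            have : drev e ∈ L2 ∩ E' := Finset.mem_inter.mpr ⟨hc, h⟩
            rw [← heq] at this
            exact hre (Finset.mem_inter.mp this).1
          by_contra hc
          have hreE : drev e ∈ E := (hE_symm e).mp heE
          have := (hs2.2 (drev e) hreE).mpr (by rw [drev_drev]; exact hc)
          exact hre2 this
      ext e
      exact ⟨key L1 L2 hs1 hs2 heq e, key L2 L1 hs2 hs1 heq.symm e⟩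
    · intro S hS
      rw [Finset.mem_filter, Finset.mem_powerset] at hS
      obtain ⟨hSE', hSne⟩ := hS
      set L : Finset (V × V) := S ∪ (E' \ S).image drev with hLdef
      have hmemL : ∀ e, e ∈ L ↔ e ∈ S ∨ drev e ∈ E' \ S := by
        intro e
        rw [hLdef]
        simp only [Finset.mem_union, Finset.mem_image]
        constructor
        · rintro (h | ⟨a, ha, rfl⟩)
          · exact Or.inl h
          · exact Or.inr (by rw [drev_drev]; exact ha)
        · rintro (h | h)
          · exact Or.inl h
          · exact Or.inr ⟨drev e, h, drev_drev e⟩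
      have hLori : IsOrientation E L := by
        constructor
        · intro e he
          rcases (hmemL e).mp he with h | h
          · exact hE'E (hSE' h)
          · exact (hE_symm e).mpr (hE'E (Finset.mem_sdiff.mp h).1)
        · intro e heE
          rw [hmemL, hmemL, drev_drev, Finset.mem_sdiff, Finset.mem_sdiff]
          rcases hcover e heE with h | h
          · have hrne : drev e ∉ E' := hdisj e h
            have hrnS : drev e ∉ S := fun hc => hrne (hSE' hc)
            tauto
          · have hene : e ∉ E' := fun hc => hdisj e hc h
            have henS : e ∉ S := fun hc => hene (hSE' hc)
            tauto
      have hLS : L ∩ E' = S := by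
        ext e
        rw [Finset.mem_inter, hmemL]
        constructor
        · rintro ⟨h | h, he'⟩
          · exact h
          · exact absurd he' (by
              have := hdisj (drev e) (Finset.mem_sdiff.mp h).1
              rw [drev_drev] at this
              exact this)
        · intro h
          exact ⟨Or.inl h, hSE' h⟩
      refine ⟨L, ?_, hLS⟩
      rw [Finset.mem_filter, Finset.mem_powerset]
      refine ⟨hLori.1, hLori, ?_⟩
      rw [ori_box_iff hE'E hE_symm hcover hdisj d hLori, hLS]
      exact hSne
  rw [hsub, hori]
  exact (count_const hH E' E' (le_refl E')).symm
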